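/- The number of permutations of [n+1] with no 3-descents equals (n+1)·Eₙ, where Eₙ is the number of up-down alternating permutations of [n]. -/

import Mathlib

open Finset
open scoped Classical

/-- entry of a permutation of `Fin n` at 0-indexed position `i` (0-based values). -/
def ent {n : ℕ} (σ : Equiv.Perm (Fin n)) (i : ℕ) : ℕ :=
  if h : i < n then (σ ⟨i, h⟩ : ℕ) else 0

/-- the triple `(a, b, c)` of distinct values, reduced to a permutation in `S₃`, is odd. -/
def odd3 (a b c : ℕ) : Prop :=
  ((if b < a then 1 else 0) + (if c < a then 1 else 0) + (if c < b then 1 else 0)) % 2 = 1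

instance (a b c : ℕ) : Decidable (odd3 a b c) := by
  unfold odd3; infer_instance

/-- 3-descent set, 0-indexed positions (position `i` here is paper position `i+1`). -/
def D3 {n : ℕ} (σ : Equiv.Perm (Fin n)) : Finset ℕ :=
  (Finset.range (n - 2)).filter (fun i => odd3 (ent σ i) (ent σ (i + 1)) (ent σ (i + 2)))

/-- alternating descent set, 0-indexed positions. -/
def altD {n : ℕ} (σ : Equiv.Perm (Fin n)) : Finset ℕ :=
  (Finset.range (n - 1)).filter (fun i =>
    (Even i ∧ ent σ (i + 1) < ent σ i) ∨ (¬ Even i ∧ ent σ i < ent σ (i + 1)))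

/-- number of up-down alternating permutations of `[n]` (the Euler number `Eₙ`). -/
noncomputable def EulerNum (n : ℕ) : ℕ :=
  ((Finset.univ : Finset (Equiv.Perm (Fin n))).filter (fun τ =>
    ∀ i ∈ Finset.range (n - 1),
      (Even i ∧ ent τ i < ent τ (i + 1)) ∨ (¬ Even i ∧ ent τ (i + 1) < ent τ i))).card

/-- `c³ᵢ(σ)`, 0-indexed: number of `j > i+1` with `σᵢ σᵢ₊₁ σⱼ` odd. -/
def c3 {n : ℕ} (σ : Equiv.Perm (Fin n)) (i : ℕ) : ℕ :=
  ((Finset.range n).filter (fun j => i + 1 < j ∧ odd3 (ent σ i) (ent σ (i + 1)) (ent σ j))).card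

/-- `ĉᵢ(σ)`, 0-indexed. -/
def chat {n : ℕ} (σ : Equiv.Perm (Fin n)) (i : ℕ) : ℕ :=
  ((Finset.range n).filter (fun j => i < j ∧
    ((Even i ∧ ent σ j < ent σ i) ∨ (¬ Even i ∧ ent σ i < ent σ j)))).card

/-- `i₃` of an arbitrary word `f 0, f 1, ..., f (m-1)`. -/
def i3f (m : ℕ) (f : ℕ → ℕ) : ℕ :=
  ((Finset.range m ×ˢ Finset.range m).filter (fun p =>
    p.1 + 1 < p.2 ∧ odd3 (f p.1) (f (p.1 + 1)) (f p.2))).card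

/-- the 3-inversion statistic `i₃`. -/
def i3 {n : ℕ} (σ : Equiv.Perm (Fin n)) : ℕ := i3f n (ent σ)

/-- the word `1*σ` (0-based values): `0, σ₀+1, σ₁+1, ...`. -/
def oneStar {n : ℕ} (σ : Equiv.Perm (Fin n)) : ℕ → ℕ :=
  fun i => if i = 0 then 0 else ent σ (i - 1) + 1

/-- number of alternating inversions `î(σ)`. -/
def altInv {n : ℕ} (σ : Equiv.Perm (Fin n)) : ℕ :=
  ((Finset.range n ×ˢ Finset.range n).filter (fun p => p.1 < p.2 ∧
    ((Even p.1 ∧ ent σ p.2 < ent σ p.1) ∨ (¬ Even p.1 ∧ ent σ p.1 < ent σ p.2)))).card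

/-- number of inversions of the word `f 0, ..., f (m-1)`. -/
def invf (m : ℕ) (f : ℕ → ℕ) : ℕ :=
  ((Finset.range m ×ˢ Finset.range m).filter (fun p => p.1 < p.2 ∧ f p.2 < f p.1)).card

/-- major index of the word `f 0, ..., f (m-1)` (descent at 0-indexed `i` contributes `i+1`). -/
def majf (m : ℕ) (f : ℕ → ℕ) : ℕ :=
  ∑ i ∈ (Finset.range (m - 1)).filter (fun i => f (i + 1) < f i), (i + 1)

/-- `Â(m, r)`: number of permutations of `[m]` with `r - 1` alternating descents. -/
def Ahat (m r : ℕ) : ℕ :=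
  ((Finset.univ : Finset (Equiv.Perm (Fin m))).filter (fun σ => (altD σ).card + 1 = r)).card

/-- down-up alternating: `σ₁ > σ₂ < σ₃ > ⋯`. -/
def DownUp {n : ℕ} (σ : Equiv.Perm (Fin n)) : Prop :=
  ∀ i ∈ Finset.range (n - 1),
    (Even i ∧ ent σ (i + 1) < ent σ i) ∨ (¬ Even i ∧ ent σ i < ent σ (i + 1))

instance {n : ℕ} (σ : Equiv.Perm (Fin n)) : Decidable (DownUp σ) := by
  unfold DownUp; infer_instance

/-- up-down alternating: `σ₁ < σ₂ > σ₃ < ⋯`. -/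
def UpDown {n : ℕ} (σ : Equiv.Perm (Fin n)) : Prop :=
  ∀ i ∈ Finset.range (n - 1),
    (Even i ∧ ent σ i < ent σ (i + 1)) ∨ (¬ Even i ∧ ent σ (i + 1) < ent σ i)

namespace Stmt4Aux

/-! ### arithmetic facts about `odd3` -/

lemma odd3_iff' {a b c : ℕ} (hab : a ≠ b) (hac : a ≠ c) (hbc : b ≠ c) :
    odd3 a b c ↔ ((a < b ∧ a < c ∧ c < b) ∨ (b < a ∧ (c < b ∨ a < c))) := by
  unfold odd3; split_ifs <;> simp <;> omega

lemma not_odd3_self (a b : ℕ) : ¬ odd3 a b b := by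
  unfold odd3; split_ifs <;> simp <;> omega

lemma odd3_total {a b c : ℕ} (hab : a ≠ b) (hac : a ≠ c) (hbc : b ≠ c) :
    odd3 a b c ∨ odd3 a c b := by
  rw [odd3_iff' hab hac hbc, odd3_iff' hac hab (Ne.symm hbc)]; omega

lemma odd3_not_both {a b c : ℕ} (hab : a ≠ b) (hac : a ≠ c) (hbc : b ≠ c) :
    ¬ (odd3 a b c ∧ odd3 a c b) := by
  rw [odd3_iff' hab hac hbc, odd3_iff' hac hab (Ne.symm hbc)]; omega

/-- if `b'` lies in the cyclic interval `(a → b)` then `(a → b') ⊆ (a → b)`. -/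
lemma odd3_trans {a b b' v : ℕ} (hab : a ≠ b) (hab' : a ≠ b') (hav : a ≠ v)
    (hbb' : b ≠ b') (hbv : b ≠ v) (hb'v : b' ≠ v)
    (h1 : odd3 a b b') (h2 : odd3 a b' v) : odd3 a b v := by
  rw [odd3_iff' hab hab' hbb'] at h1
  rw [odd3_iff' hab' hav hb'v] at h2
  rw [odd3_iff' hab hav hbv]
  omega

/-- covering: if the triple `a b c` is odd then every `v` is in `(a→b)` or `(b→c)`. -/
lemma odd3_cover {a b c v : ℕ} (hab : a ≠ b) (hac : a ≠ c) (hav : a ≠ v)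
    (hbc : b ≠ c) (hbv : b ≠ v) (hcv : c ≠ v)
    (h1 : odd3 a b c) (h2 : ¬ odd3 a b v) : odd3 b c v := by
  rw [odd3_iff' hab hac hbc] at h1
  rw [odd3_iff' hab hav hbv] at h2
  rw [odd3_iff' hbc hbv hcv]
  omega

/-- disjointness: if the triple `a b c` is even then `(a→b)` and `(b→c)` are disjoint. -/
lemma odd3_disj {a b c v : ℕ} (hab : a ≠ b) (hac : a ≠ c) (hav : a ≠ v)
    (hbc : b ≠ c) (hbv : b ≠ v) (hcv : c ≠ v)
    (h1 : ¬ odd3 a b c) (h2 : odd3 a b v) (h3 : odd3 b c v) : False := by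
  rw [odd3_iff' hab hac hbc] at h1
  rw [odd3_iff' hab hav hbv] at h2
  rw [odd3_iff' hbc hbv hcv] at h3
  omega

/-! ### `ent` basics -/

variable {m : ℕ}

lemma ent_eq (σ : Equiv.Perm (Fin m)) {i : ℕ} (h : i < m) : ent σ i = (σ ⟨i, h⟩ : ℕ) :=
  dif_pos h

lemma ent_lt (σ : Equiv.Perm (Fin m)) {i : ℕ} (h : i < m) : ent σ i < m := by
  rw [ent_eq σ h]; exact (σ ⟨i, h⟩).2

lemma ent_inj (σ : Equiv.Perm (Fin m)) {i j : ℕ} (hi : i < m) (hj : j < m)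
    (h : ent σ i = ent σ j) : i = j := by
  rw [ent_eq σ hi, ent_eq σ hj] at h
  have h2 : σ ⟨i, hi⟩ = σ ⟨j, hj⟩ := Fin.val_injective h
  simpa using σ.injective h2

lemma ent_ne (σ : Equiv.Perm (Fin m)) {i j : ℕ} (hi : i < m) (hj : j < m)
    (h : i ≠ j) : ent σ i ≠ ent σ j := fun he => h (ent_inj σ hi hj he)

lemma ent_ext {σ σ' : Equiv.Perm (Fin m)} (h : ∀ i < m, ent σ i = ent σ' i) : σ = σ' := by
  apply Equiv.ext; intro x
  have hx := h x.1 x.2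
  rw [ent_eq σ x.2, ent_eq σ' x.2] at hx
  exact Fin.val_injective hx

/-! ### the set of values not among the first `i` entries -/

noncomputable def Rem (σ : Equiv.Perm (Fin m)) (i : ℕ) : Finset ℕ :=
  (Finset.range m).filter (fun v => ∀ j < i, ent σ j ≠ v)

lemma mem_Rem {σ : Equiv.Perm (Fin m)} {i v : ℕ} :
    v ∈ Rem σ i ↔ v < m ∧ ∀ j < i, ent σ j ≠ v := by
  simp [Rem]

lemma ent_mem_Rem (σ : Equiv.Perm (Fin m)) {i j : ℕ} (hij : i ≤ j) (hj : j < m) :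
    ent σ j ∈ Rem σ i :=
  mem_Rem.2 ⟨ent_lt σ hj, fun k hk => ent_ne σ (by omega) hj (by omega)⟩

lemma ent_not_mem_Rem (σ : Equiv.Perm (Fin m)) {i j : ℕ} (hij : j < i) (hj : j < m) :
    ent σ j ∉ Rem σ i := fun hmem => (mem_Rem.1 hmem).2 j hij rfl

lemma Rem_card (σ : Equiv.Perm (Fin m)) {i : ℕ} (him : i ≤ m) :
    (Rem σ i).card = m - i := by
  have he : Rem σ i = Finset.range m \ (Finset.range i).image (ent σ) := by
    ext v
    simp only [mem_Rem, Finset.mem_sdiff, Finset.mem_range, Finset.mem_image, not_exists,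
      not_and]
  have hinj : Set.InjOn (ent σ) (Finset.range i) := by
    intro x hx y hy hxy
    simp only [Finset.coe_range, Set.mem_Iio] at hx hy
    exact ent_inj σ (by omega) (by omega) hxy
  have hsub : (Finset.range i).image (ent σ) ⊆ Finset.range m := by
    intro v hv
    simp only [Finset.mem_image, Finset.mem_range] at hv
    obtain ⟨j, hj, rfl⟩ := hv
    exact Finset.mem_range.2 (ent_lt σ (by omega))
  rw [he, Finset.card_sdiff_of_subset hsub, Finset.card_range, Finset.card_image_of_injOn hinj,
    Finset.card_range]

lemma Rem_succ (σ : Equiv.Perm (Fin m)) (i : ℕ) :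
    Rem σ (i + 1) = (Rem σ i).erase (ent σ i) := by
  ext v
  simp only [mem_Rem, Finset.mem_erase]
  constructor
  · rintro ⟨h1, h2⟩
    exact ⟨fun he => h2 i (by omega) he.symm, h1, fun j hj => h2 j (by omega)⟩
  · rintro ⟨h0, h1, h2⟩
    refine ⟨h1, fun j hj => ?_⟩
    rcases Nat.lt_succ_iff_lt_or_eq.1 hj with hj' | rfl
    · exact h2 j hj'
    · exact fun he => h0 he.symm

end Stmt4Aux
namespace Stmt4Aux

variable {m : ℕ}

lemma c3_eq (σ : Equiv.Perm (Fin m)) (i : ℕ) :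
    c3 σ i = ((Rem σ (i + 2)).filter (fun v => odd3 (ent σ i) (ent σ (i + 1)) v)).card := by
  unfold c3
  apply Finset.card_bij (fun j _ => ent σ j)
  · intro j hj
    simp only [Finset.mem_filter, Finset.mem_range] at hj
    exact Finset.mem_filter.2 ⟨ent_mem_Rem σ (by omega) hj.1, hj.2.2⟩
  · intro j1 h1 j2 h2 he
    simp only [Finset.mem_filter, Finset.mem_range] at h1 h2
    exact ent_inj σ h1.1 h2.1 he
  · intro v hv
    obtain ⟨hvR, hP⟩ := Finset.mem_filter.1 hv
    obtain ⟨hvm, hvnot⟩ := mem_Rem.1 hvR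
    have hlt : ((σ.symm ⟨v, hvm⟩ : Fin m) : ℕ) < m := (σ.symm ⟨v, hvm⟩).2
    have hent : ent σ ((σ.symm ⟨v, hvm⟩ : Fin m) : ℕ) = v := by
      rw [ent_eq σ hlt]; simp
    have hk : i + 1 < ((σ.symm ⟨v, hvm⟩ : Fin m) : ℕ) := by
      by_contra hcon
      exact hvnot _ (by omega) hent
    refine ⟨_, Finset.mem_filter.2 ⟨Finset.mem_range.2 hlt, hk, by rw [hent]; exact hP⟩, hent⟩

lemma chat_eq (σ : Equiv.Perm (Fin m)) (i : ℕ) :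
    chat σ i = ((Rem σ (i + 1)).filter
      (fun v => (Even i ∧ v < ent σ i) ∨ (¬ Even i ∧ ent σ i < v))).card := by
  unfold chat
  apply Finset.card_bij (fun j _ => ent σ j)
  · intro j hj
    simp only [Finset.mem_filter, Finset.mem_range] at hj
    exact Finset.mem_filter.2 ⟨ent_mem_Rem σ (by omega) hj.1, hj.2.2⟩
  · intro j1 h1 j2 h2 he
    simp only [Finset.mem_filter, Finset.mem_range] at h1 h2
    exact ent_inj σ h1.1 h2.1 he
  · intro v hv
    obtain ⟨hvR, hP⟩ := Finset.mem_filter.1 hv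
    obtain ⟨hvm, hvnot⟩ := mem_Rem.1 hvR
    have hlt : ((σ.symm ⟨v, hvm⟩ : Fin m) : ℕ) < m := (σ.symm ⟨v, hvm⟩).2
    have hent : ent σ ((σ.symm ⟨v, hvm⟩ : Fin m) : ℕ) = v := by
      rw [ent_eq σ hlt]; simp
    have hk : i < ((σ.symm ⟨v, hvm⟩ : Fin m) : ℕ) := by
      by_contra hcon
      exact hvnot _ (by omega) hent
    refine ⟨_, Finset.mem_filter.2 ⟨Finset.mem_range.2 hlt, hk, by rw [hent]; exact hP⟩, hent⟩

lemma c3_le (σ : Equiv.Perm (Fin m)) {i : ℕ} (h : i + 2 ≤ m) : c3 σ i + (i + 2) ≤ m := by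
  have := Finset.card_filter_le (Rem σ (i + 2))
    (fun v => odd3 (ent σ i) (ent σ (i + 1)) v)
  rw [← c3_eq] at this
  rw [Rem_card σ h] at this
  omega

lemma chat_le (σ : Equiv.Perm (Fin m)) {i : ℕ} (h : i + 1 ≤ m) : chat σ i + (i + 1) ≤ m := by
  have := Finset.card_filter_le (Rem σ (i + 1))
    (fun v => (Even i ∧ v < ent σ i) ∨ (¬ Even i ∧ ent σ i < v))
  rw [← chat_eq] at this
  rw [Rem_card σ h] at this
  omega

/-! ### the key local lemmas -/

lemma c3_local (σ : Equiv.Perm (Fin m)) {i : ℕ} (h : i + 2 < m) :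
    odd3 (ent σ i) (ent σ (i + 1)) (ent σ (i + 2)) ↔
      m ≤ c3 σ i + c3 σ (i + 1) + (i + 2) := by
  set a := ent σ i with ha
  set b := ent σ (i + 1) with hb
  set c := ent σ (i + 2) with hc
  have hab : a ≠ b := ent_ne σ (by omega) (by omega) (by omega)
  have hac : a ≠ c := ent_ne σ (by omega) (by omega) (by omega)
  have hbc : b ≠ c := ent_ne σ (by omega) (by omega) (by omega)
  have hcR : c ∈ Rem σ (i + 2) := ent_mem_Rem σ (by omega) (by omega)
  have haR : a ∉ Rem σ (i + 2) := ent_not_mem_Rem σ (by omega) (by omega)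
  have hbR : b ∉ Rem σ (i + 2) := ent_not_mem_Rem σ (by omega) (by omega)
  have hR2card : (Rem σ (i + 2)).card = m - (i + 2) := Rem_card σ (by omega)
  have hR3 : Rem σ (i + 1 + 2) = (Rem σ (i + 2)).erase c := by
    have : i + 1 + 2 = (i + 2) + 1 := by omega
    rw [this, Rem_succ σ (i + 2)]
  set S1 := (Rem σ (i + 2)).filter (fun v => odd3 a b v) with hS1
  set S2 := ((Rem σ (i + 2)).erase c).filter (fun v => odd3 b c v) with hS2
  have hc3i : c3 σ i = S1.card := c3_eq σ i
  have hc3i1 : c3 σ (i + 1) = S2.card := by rw [c3_eq σ (i + 1), hR3]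
  rw [hc3i, hc3i1]
  constructor
  · intro hodd
    have hsub : Rem σ (i + 2) ⊆ S1 ∪ S2 := by
      intro v hv
      have hva : v ≠ a := fun he => haR (he ▸ hv)
      have hvb : v ≠ b := fun he => hbR (he ▸ hv)
      by_cases hvc : v = c
      · exact Finset.mem_union_left _ (Finset.mem_filter.2 ⟨hv, hvc ▸ hodd⟩)
      · by_cases h1 : odd3 a b v
        · exact Finset.mem_union_left _ (Finset.mem_filter.2 ⟨hv, h1⟩)
        · refine Finset.mem_union_right _ (Finset.mem_filter.2
            ⟨Finset.mem_erase.2 ⟨hvc, hv⟩, ?_⟩)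
          exact odd3_cover hab hac (Ne.symm hva) hbc (Ne.symm hvb) (Ne.symm hvc) hodd h1
    have h1 := Finset.card_le_card hsub
    have h2 := Finset.card_union_le S1 S2
    omega
  · intro hge
    by_contra hodd
    have hd : Disjoint S1 S2 := by
      rw [Finset.disjoint_left]
      intro v hv1 hv2
      obtain ⟨hvR, hP1⟩ := Finset.mem_filter.1 hv1
      obtain ⟨hvE, hP2⟩ := Finset.mem_filter.1 hv2
      have hva : v ≠ a := fun he => haR (he ▸ hvR)
      have hvb : v ≠ b := fun he => hbR (he ▸ hvR)
      have hvc : v ≠ c := (Finset.mem_erase.1 hvE).1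
      exact odd3_disj hab hac (Ne.symm hva) hbc (Ne.symm hvb) (Ne.symm hvc) hodd hP1 hP2
    have hsub : S1 ∪ S2 ⊆ (Rem σ (i + 2)).erase c := by
      intro v hv
      rcases Finset.mem_union.1 hv with hv1 | hv2
      · obtain ⟨hvR, hP1⟩ := Finset.mem_filter.1 hv1
        refine Finset.mem_erase.2 ⟨?_, hvR⟩
        intro he; exact hodd (he ▸ hP1)
      · exact Finset.filter_subset _ _ hv2
    have h1 := Finset.card_le_card hsub
    rw [Finset.card_union_of_disjoint hd] at h1
    have h2 : ((Rem σ (i + 2)).erase c).card = m - (i + 2) - 1 := by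
      rw [Finset.card_erase_of_mem hcR, hR2card]
    omega

lemma chat_local (σ : Equiv.Perm (Fin m)) {i : ℕ} (h : i + 1 < m) :
    ((Even i ∧ ent σ (i + 1) < ent σ i) ∨ (¬ Even i ∧ ent σ i < ent σ (i + 1))) ↔
      m ≤ chat σ i + chat σ (i + 1) + (i + 1) := by
  set a := ent σ i with ha
  set b := ent σ (i + 1) with hb
  have hab : a ≠ b := ent_ne σ (by omega) (by omega) (by omega)
  have hbR : b ∈ Rem σ (i + 1) := ent_mem_Rem σ (by omega) (by omega)
  have haR : a ∉ Rem σ (i + 1) := ent_not_mem_Rem σ (by omega) (by omega)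
  have hR1card : (Rem σ (i + 1)).card = m - (i + 1) := Rem_card σ (by omega)
  have hR2 : Rem σ (i + 1 + 1) = (Rem σ (i + 1)).erase b := Rem_succ σ (i + 1)
  set S1 := (Rem σ (i + 1)).filter (fun v => (Even i ∧ v < a) ∨ (¬ Even i ∧ a < v)) with hS1
  set S2 := ((Rem σ (i + 1)).erase b).filter
      (fun v => (Even (i + 1) ∧ v < b) ∨ (¬ Even (i + 1) ∧ b < v)) with hS2
  have hc1 : chat σ i = S1.card := chat_eq σ i
  have hc2 : chat σ (i + 1) = S2.card := by rw [chat_eq σ (i + 1), hR2]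
  have hpar : ¬ Even (i + 1) ↔ Even i := by simp [Nat.even_add_one]
  rw [hc1, hc2]
  constructor
  · intro hdes
    have hsub : Rem σ (i + 1) ⊆ S1 ∪ S2 := by
      intro v hv
      have hva : v ≠ a := fun he => haR (he ▸ hv)
      by_cases hvb : v = b
      · subst hvb
        refine Finset.mem_union_left _ (Finset.mem_filter.2 ⟨hv, ?_⟩)
        rcases hdes with ⟨he, hlt⟩ | ⟨he, hlt⟩
        · exact Or.inl ⟨he, hlt⟩
        · exact Or.inr ⟨he, hlt⟩
      · rcases hdes with ⟨he, hlt⟩ | ⟨he, hlt⟩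
        · -- Even i, b < a
          rcases lt_or_gt_of_ne hva with hlt2 | hlt2
          · exact Finset.mem_union_left _ (Finset.mem_filter.2 ⟨hv, Or.inl ⟨he, hlt2⟩⟩)
          · refine Finset.mem_union_right _ (Finset.mem_filter.2
              ⟨Finset.mem_erase.2 ⟨hvb, hv⟩, Or.inr ⟨by simp [Nat.even_add_one, he], by omega⟩⟩)
        · -- odd i, a < b
          rcases lt_or_gt_of_ne hva with hlt2 | hlt2
          · refine Finset.mem_union_right _ (Finset.mem_filter.2
              ⟨Finset.mem_erase.2 ⟨hvb, hv⟩, Or.inl ⟨by simp [Nat.even_add_one, he], by omega⟩⟩)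
          · exact Finset.mem_union_left _ (Finset.mem_filter.2 ⟨hv, Or.inr ⟨he, hlt2⟩⟩)
    have h1 := Finset.card_le_card hsub
    have h2 := Finset.card_union_le S1 S2
    omega
  · intro hge
    by_contra hdes
    have hdes' : (Even i ∧ a < b) ∨ (¬ Even i ∧ b < a) := by
      rcases Nat.even_or_odd i with he | he
      · refine Or.inl ⟨he, ?_⟩
        rcases lt_or_gt_of_ne hab with h' | h'
        · exact h'
        · exact absurd (Or.inl ⟨he, h'⟩) hdes
      · have he' : ¬ Even i := Nat.not_even_iff_odd.2 he
        refine Or.inr ⟨he', ?_⟩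
        rcases lt_or_gt_of_ne hab with h' | h'
        · exact absurd (Or.inr ⟨he', h'⟩) hdes
        · exact h'
    have hd : Disjoint S1 S2 := by
      rw [Finset.disjoint_left]
      intro v hv1 hv2
      obtain ⟨hvR, hP1⟩ := Finset.mem_filter.1 hv1
      obtain ⟨hvE, hP2⟩ := Finset.mem_filter.1 hv2
      have hpar2 : Even (i + 1) ↔ ¬ Even i := by simp [Nat.even_add_one]
      rcases hdes' with ⟨he, hlt⟩ | ⟨he, hlt⟩
      · have h1 : v < a := by
          rcases hP1 with ⟨_, h'⟩ | ⟨he1, _⟩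
          · exact h'
          · exact absurd he he1
        have h2 : b < v := by
          rcases hP2 with ⟨he2, _⟩ | ⟨_, h'⟩
          · exact absurd he (hpar2.1 he2)
          · exact h'
        omega
      · have h1 : a < v := by
          rcases hP1 with ⟨he1, _⟩ | ⟨_, h'⟩
          · exact absurd he1 he
          · exact h'
        have h2 : v < b := by
          rcases hP2 with ⟨_, h'⟩ | ⟨he2, _⟩
          · exact h'
          · exact absurd (hpar2.2 he) he2
        omega
    have hsub : S1 ∪ S2 ⊆ (Rem σ (i + 1)).erase b := by
      intro v hv
      rcases Finset.mem_union.1 hv with hv1 | hv2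
      · obtain ⟨hvR, hP1⟩ := Finset.mem_filter.1 hv1
        refine Finset.mem_erase.2 ⟨?_, hvR⟩
        intro he
        subst he
        rcases hdes' with ⟨hpe, hlt⟩ | ⟨hpe, hlt⟩ <;>
          rcases hP1 with ⟨he1, h1⟩ | ⟨he1, h1⟩
        · omega
        · exact he1 hpe
        · exact hpe he1
        · omega
      · exact Finset.filter_subset _ _ hv2
    have h1 := Finset.card_le_card hsub
    rw [Finset.card_union_of_disjoint hd] at h1
    have h2 : ((Rem σ (i + 1)).erase b).card = m - (i + 1) - 1 := by
      rw [Finset.card_erase_of_mem hbR, hR1card]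
    omega

end Stmt4Aux
namespace Stmt4Aux

variable {m : ℕ}

lemma filter_card_lt {R : Finset ℕ} {p q : ℕ → Prop} [DecidablePred p] [DecidablePred q]
    (himp : ∀ v ∈ R, p v → q v)
    {w : ℕ} (hw : w ∈ R) (hqw : q w) (hpw : ¬ p w) :
    (R.filter p).card < (R.filter q).card := by
  apply Finset.card_lt_card
  rw [Finset.ssubset_def]
  constructor
  · intro x hx
    obtain ⟨h1, h2⟩ := Finset.mem_filter.1 hx
    exact Finset.mem_filter.2 ⟨h1, himp x h1 h2⟩
  · intro hsub
    exact hpw (Finset.mem_filter.1 (hsub (Finset.mem_filter.2 ⟨hw, hqw⟩))).2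

lemma filter_erase_self {R : Finset ℕ} {p : ℕ → Prop} [DecidablePred p] {w : ℕ} (hp : ¬ p w) :
    ((R.erase w).filter p) = R.filter p := by
  ext v
  simp only [Finset.mem_filter, Finset.mem_erase]
  constructor
  · rintro ⟨⟨_, hv⟩, hpv⟩; exact ⟨hv, hpv⟩
  · rintro ⟨hv, hpv⟩; exact ⟨⟨fun he => hp (he ▸ hpv), hv⟩, hpv⟩

lemma cmp_count_inj {R : Finset ℕ} (E : Prop) [Decidable E] {b b' : ℕ} (hb : b ∈ R) (hb' : b' ∈ R)
    (h : (R.filter (fun v => (E ∧ v < b) ∨ (¬ E ∧ b < v))).card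
       = (R.filter (fun v => (E ∧ v < b') ∨ (¬ E ∧ b' < v))).card) : b = b' := by
  by_contra hne
  by_cases hE : E
  · rcases lt_or_gt_of_ne hne with hl | hl
    · have := filter_card_lt (p := fun v => (E ∧ v < b) ∨ (¬ E ∧ b < v))
        (q := fun v => (E ∧ v < b') ∨ (¬ E ∧ b' < v))
        (fun v _ hv => by rcases hv with ⟨_, h2⟩ | ⟨h1, _⟩
                          · exact Or.inl ⟨hE, by omega⟩
                          · exact absurd hE h1)
        hb (Or.inl ⟨hE, hl⟩)
        (by rintro (⟨h1, h2⟩ | ⟨h1, h2⟩) <;> first | omega | exact h1 hE)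
      omega
    · have := filter_card_lt (p := fun v => (E ∧ v < b') ∨ (¬ E ∧ b' < v))
        (q := fun v => (E ∧ v < b) ∨ (¬ E ∧ b < v))
        (fun v _ hv => by rcases hv with ⟨_, h2⟩ | ⟨h1, _⟩
                          · exact Or.inl ⟨hE, by omega⟩
                          · exact absurd hE h1)
        hb' (Or.inl ⟨hE, hl⟩)
        (by rintro (⟨h1, h2⟩ | ⟨h1, h2⟩) <;> first | omega | exact h1 hE)
      omega
  · rcases lt_or_gt_of_ne hne with hl | hl
    · have := filter_card_lt (p := fun v => (E ∧ v < b') ∨ (¬ E ∧ b' < v))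
        (q := fun v => (E ∧ v < b) ∨ (¬ E ∧ b < v))
        (fun v _ hv => by rcases hv with ⟨h1, _⟩ | ⟨_, h2⟩
                          · exact absurd h1 hE
                          · exact Or.inr ⟨hE, by omega⟩)
        hb' (Or.inr ⟨hE, hl⟩)
        (by rintro (⟨h1, h2⟩ | ⟨h1, h2⟩) <;> first | omega | exact hE h1)
      omega
    · have := filter_card_lt (p := fun v => (E ∧ v < b) ∨ (¬ E ∧ b < v))
        (q := fun v => (E ∧ v < b') ∨ (¬ E ∧ b' < v))
        (fun v _ hv => by rcases hv with ⟨h1, _⟩ | ⟨_, h2⟩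
                          · exact absurd h1 hE
                          · exact Or.inr ⟨hE, by omega⟩)
        hb (Or.inr ⟨hE, hl⟩)
        (by rintro (⟨h1, h2⟩ | ⟨h1, h2⟩) <;> first | omega | exact hE h1)
      omega

lemma c3_value_inj {R : Finset ℕ} {a b b' : ℕ} (ha : a ∉ R) (hb : b ∈ R) (hb' : b' ∈ R)
    (h : (R.filter (fun v => odd3 a b v)).card = (R.filter (fun v => odd3 a b' v)).card) :
    b = b' := by
  by_contra hne
  have hab : a ≠ b := fun he => ha (he ▸ hb)
  have hab' : a ≠ b' := fun he => ha (he ▸ hb')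
  rcases odd3_total hab hab' hne with hcase | hcase
  · -- odd3 a b b' : the `b'`-interval is strictly inside the `b`-interval
    have := filter_card_lt (p := fun v => odd3 a b' v) (q := fun v => odd3 a b v)
      (fun v hv hpv => by
        have hav : a ≠ v := fun he => ha (he ▸ hv)
        have hb'v : b' ≠ v := fun he => not_odd3_self a b' (he ▸ hpv)
        have hbv : b ≠ v := fun he =>
          odd3_not_both hab hab' hne ⟨hcase, he ▸ hpv⟩
        exact odd3_trans hab hab' hav hne hbv hb'v hcase hpv)
      hb' hcase (not_odd3_self a b')
    omega
  · have := filter_card_lt (p := fun v => odd3 a b v) (q := fun v => odd3 a b' v)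
      (fun v hv hpv => by
        have hav : a ≠ v := fun he => ha (he ▸ hv)
        have hbv : b ≠ v := fun he => not_odd3_self a b (he ▸ hpv)
        have hb'v : b' ≠ v := fun he =>
          odd3_not_both hab' hab (Ne.symm hne) ⟨hcase, he ▸ hpv⟩
        exact odd3_trans hab' hab hav (Ne.symm hne) hb'v hbv hcase hpv)
      hb hcase (not_odd3_self a b)
    omega

/-! ### injectivity of the two codes -/

lemma chat_inj {τ τ' : Equiv.Perm (Fin m)} (h : ∀ i < m, chat τ i = chat τ' i) : τ = τ' := by
  apply ent_ext
  intro i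
  induction i using Nat.strong_induction_on with
  | _ i ih =>
    intro hi
    have hR : Rem τ i = Rem τ' i := by
      ext v
      simp only [mem_Rem]
      constructor <;> rintro ⟨h1, h2⟩ <;> refine ⟨h1, fun j hj => ?_⟩
      · rw [← ih j hj (by omega)]; exact h2 j hj
      · rw [ih j hj (by omega)]; exact h2 j hj
    have hb : ent τ i ∈ Rem τ i := ent_mem_Rem τ le_rfl hi
    have hb' : ent τ' i ∈ Rem τ i := hR ▸ ent_mem_Rem τ' le_rfl hi
    have hc := h i hi
    have e1 : Rem τ (i + 1) = (Rem τ i).erase (ent τ i) := Rem_succ τ i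
    have e2 : Rem τ' (i + 1) = (Rem τ' i).erase (ent τ' i) := Rem_succ τ' i
    rw [chat_eq τ i, chat_eq τ' i, e1, e2, ← hR,
      filter_erase_self (by rintro (⟨_, h2⟩ | ⟨_, h2⟩) <;> exact lt_irrefl _ h2),
      filter_erase_self (by rintro (⟨_, h2⟩ | ⟨_, h2⟩) <;> exact lt_irrefl _ h2)] at hc
    exact cmp_count_inj (Even i) hb hb' hc

lemma c3_inj {σ σ' : Equiv.Perm (Fin m)} (h0 : ent σ 0 = ent σ' 0)
    (h : ∀ i, i + 1 < m → c3 σ i = c3 σ' i) : σ = σ' := by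
  apply ent_ext
  intro i
  induction i using Nat.strong_induction_on with
  | _ i ih =>
    intro hi
    match i with
    | 0 => exact h0
    | (k + 1) =>
      have hR : Rem σ (k + 1) = Rem σ' (k + 1) := by
        ext v
        simp only [mem_Rem]
        constructor <;> rintro ⟨h1, h2⟩ <;> refine ⟨h1, fun j hj => ?_⟩
        · rw [← ih j (by omega) (by omega)]; exact h2 j hj
        · rw [ih j (by omega) (by omega)]; exact h2 j hj
      have ha : ent σ k = ent σ' k := ih k (by omega) (by omega)
      have hb : ent σ (k + 1) ∈ Rem σ (k + 1) := ent_mem_Rem σ le_rfl hi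
      have hb' : ent σ' (k + 1) ∈ Rem σ (k + 1) := hR ▸ ent_mem_Rem σ' le_rfl hi
      have haR : ent σ k ∉ Rem σ (k + 1) := ent_not_mem_Rem σ (by omega) (by omega)
      have hc := h k (by omega)
      have e1 : Rem σ (k + 2) = (Rem σ (k + 1)).erase (ent σ (k + 1)) := Rem_succ σ (k + 1)
      have e2 : Rem σ' (k + 2) = (Rem σ' (k + 1)).erase (ent σ' (k + 1)) := Rem_succ σ' (k + 1)
      rw [c3_eq σ k, c3_eq σ' k, e1, e2, ← hR, ← ha,
        filter_erase_self (not_odd3_self _ _),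
        filter_erase_self (not_odd3_self _ _)] at hc
      exact c3_value_inj haR hb hb' hc

/-! ### the code space -/

noncomputable def pin (n : ℕ) : Finset (Fin n → ℕ) :=
  Fintype.piFinset (fun i => Finset.range (n - (i : ℕ)))

lemma prod_sub (n : ℕ) : (∏ i : Fin n, (n - (i : ℕ))) = n.factorial := by
  induction n with
  | zero => simp
  | succ n ih =>
    rw [Fin.prod_univ_succ]
    have h1 : (n + 1) - ((0 : Fin (n + 1)) : ℕ) = n + 1 := by simp
    have h2 : ∀ i : Fin n, (n + 1) - ((i.succ : Fin (n + 1)) : ℕ) = n - (i : ℕ) := by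
      intro i; simp [Fin.val_succ]
    rw [h1]
    rw [Finset.prod_congr rfl (fun i _ => h2 i), ih, Nat.factorial_succ]

lemma pin_card (n : ℕ) : (pin n).card = n.factorial := by
  rw [pin, Fintype.card_piFinset]
  simp only [Finset.card_range]
  exact prod_sub n

def Qc (n : ℕ) (f : Fin n → ℕ) : Prop :=
  ∀ i : ℕ, ∀ h : i + 1 < n, f ⟨i, by omega⟩ + f ⟨i + 1, h⟩ + i + 2 ≤ n

end Stmt4Aux
namespace Stmt4Aux

lemma euler_eq (n : ℕ) : EulerNum n = ((pin n).filter (Qc n)).card := by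
  classical
  set Φ : Equiv.Perm (Fin n) → (Fin n → ℕ) := fun τ => (fun i => chat τ (i : ℕ)) with hΦ
  have hmem : ∀ τ : Equiv.Perm (Fin n), Φ τ ∈ pin n := by
    intro τ
    rw [pin, Fintype.mem_piFinset]
    intro i
    rw [Finset.mem_range]
    show chat τ (i : ℕ) < n - (i : ℕ)
    have := chat_le τ (show (i : ℕ) + 1 ≤ n by omega)
    omega
  have hinj : Function.Injective Φ := by
    intro τ τ' he
    exact chat_inj (fun i hi => congrFun he ⟨i, hi⟩)
  have himg : Finset.univ.image Φ = pin n := by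
    apply Finset.eq_of_subset_of_card_le
    · intro f hf
      obtain ⟨τ, _, rfl⟩ := Finset.mem_image.1 hf
      exact hmem τ
    · rw [Finset.card_image_of_injective _ hinj, pin_card, Finset.card_univ,
        Fintype.card_perm, Fintype.card_fin]
  have hPQ : ∀ τ : Equiv.Perm (Fin n),
      (∀ i ∈ Finset.range (n - 1),
        (Even i ∧ ent τ i < ent τ (i + 1)) ∨ (¬ Even i ∧ ent τ (i + 1) < ent τ i))
        ↔ Qc n (Φ τ) := by
    intro τ
    have key : ∀ i : ℕ, i + 1 < n →
        (((Even i ∧ ent τ i < ent τ (i + 1)) ∨ (¬ Even i ∧ ent τ (i + 1) < ent τ i))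
          ↔ chat τ i + chat τ (i + 1) + i + 2 ≤ n) := by
      intro i hi
      have hne : ent τ i ≠ ent τ (i + 1) := ent_ne τ (by omega) (by omega) (by omega)
      have hloc := chat_local τ hi
      constructor
      · intro hiq
        have hnot : ¬ ((Even i ∧ ent τ (i + 1) < ent τ i) ∨
            (¬ Even i ∧ ent τ i < ent τ (i + 1))) := by
          rintro (⟨he2, hlt2⟩ | ⟨he2, hlt2⟩) <;>
            rcases hiq with ⟨he, hlt⟩ | ⟨he, hlt⟩ <;>
              first | omega | exact he2 he | exact he he2
        rw [hloc] at hnot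
        omega
      · intro hle
        have hnot : ¬ ((Even i ∧ ent τ (i + 1) < ent τ i) ∨
            (¬ Even i ∧ ent τ i < ent τ (i + 1))) := by
          rw [hloc]; omega
        rcases Nat.even_or_odd i with he | he
        · refine Or.inl ⟨he, ?_⟩
          rcases lt_or_gt_of_ne hne with h' | h'
          · exact h'
          · exact absurd (Or.inl ⟨he, h'⟩) hnot
        · have he' : ¬ Even i := Nat.not_even_iff_odd.2 he
          refine Or.inr ⟨he', ?_⟩
          rcases lt_or_gt_of_ne hne with h' | h'
          · exact absurd (Or.inr ⟨he', h'⟩) hnot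
          · exact h'
    constructor
    · intro hP i hi
      exact (key i hi).1 (hP i (Finset.mem_range.2 (by omega)))
    · intro hQ i hi
      have hi' : i + 1 < n := by have := Finset.mem_range.1 hi; omega
      exact (key i hi').2 (hQ i hi')
  have h1 : (Finset.univ.filter (fun τ => Qc n (Φ τ))).card = ((pin n).filter (Qc n)).card :=
    calc (Finset.univ.filter (fun τ => Qc n (Φ τ))).card
        = ((Finset.univ.filter (fun τ => Qc n (Φ τ))).image Φ).card :=
          (Finset.card_image_of_injective _ hinj).symm
      _ = ((Finset.univ.image Φ).filter (Qc n)).card := by rw [Finset.filter_image]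
      _ = ((pin n).filter (Qc n)).card := by rw [himg]
  unfold EulerNum
  rw [← h1]
  congr 1
  ext τ
  simp only [Finset.mem_filter, Finset.mem_univ, true_and]
  exact hPQ τ

lemma lhs_eq (n : ℕ) :
    ((Finset.univ : Finset (Equiv.Perm (Fin (n + 1)))).filter
      (fun σ => D3 σ = (∅ : Finset ℕ))).card = (n + 1) * ((pin n).filter (Qc n)).card := by
  classical
  set Ψ : Equiv.Perm (Fin (n + 1)) → (Fin (n + 1)) × (Fin n → ℕ) :=
    fun σ => (σ 0, fun i => c3 σ (i : ℕ)) with hΨ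
  have hmem : ∀ σ : Equiv.Perm (Fin (n + 1)),
      Ψ σ ∈ (Finset.univ : Finset (Fin (n + 1))) ×ˢ pin n := by
    intro σ
    rw [Finset.mem_product]
    refine ⟨Finset.mem_univ _, ?_⟩
    rw [pin, Fintype.mem_piFinset]
    intro i
    rw [Finset.mem_range]
    show c3 σ (i : ℕ) < n - (i : ℕ)
    have := c3_le σ (show (i : ℕ) + 2 ≤ n + 1 by omega)
    omega
  have hinj : Function.Injective Ψ := by
    intro σ σ' he
    have h1 : σ 0 = σ' 0 := congrArg Prod.fst he
    have h2 : ∀ i, i + 1 < n + 1 → c3 σ i = c3 σ' i := by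
      intro i hi
      exact congrFun (congrArg Prod.snd he) ⟨i, by omega⟩
    apply c3_inj _ h2
    rw [ent_eq σ (by omega), ent_eq σ' (by omega)]
    have h0 : (⟨0, by omega⟩ : Fin (n + 1)) = 0 := rfl
    rw [h0, h1]
  have himg : Finset.univ.image Ψ = (Finset.univ : Finset (Fin (n + 1))) ×ˢ pin n := by
    apply Finset.eq_of_subset_of_card_le
    · intro p hp
      obtain ⟨σ, _, rfl⟩ := Finset.mem_image.1 hp
      exact hmem σ
    · have himgcard : ((Finset.univ : Finset (Equiv.Perm (Fin (n + 1)))).image Ψ).card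
          = (n + 1).factorial := by
        rw [Finset.card_image_of_injective _ hinj, Finset.card_univ, Fintype.card_perm,
          Fintype.card_fin]
      rw [himgcard, Finset.card_product, pin_card, Finset.card_univ, Fintype.card_fin]
      exact Nat.le_of_eq (Nat.factorial_succ _).symm
  have hPQ : ∀ σ : Equiv.Perm (Fin (n + 1)), (D3 σ = (∅ : Finset ℕ)) ↔ Qc n ((Ψ σ).2) := by
    intro σ
    unfold D3
    rw [Finset.filter_eq_empty_iff]
    constructor
    · intro hP i hi
      show c3 σ i + c3 σ (i + 1) + i + 2 ≤ n
      have hno := hP (Finset.mem_range.2 (show i < n + 1 - 2 by omega))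
      rw [c3_local σ (show i + 2 < n + 1 by omega)] at hno
      omega
    · intro hQ i hi
      have hi' : i + 1 < n := by have := Finset.mem_range.1 hi; omega
      have hq : c3 σ i + c3 σ (i + 1) + i + 2 ≤ n := hQ i hi'
      rw [c3_local σ (show i + 2 < n + 1 by omega)]
      omega
  have hsplit : (((Finset.univ : Finset (Fin (n + 1))) ×ˢ pin n).filter (fun p => Qc n p.2))
      = (Finset.univ : Finset (Fin (n + 1))) ×ˢ ((pin n).filter (Qc n)) := by
    ext p
    simp only [Finset.mem_filter, Finset.mem_product, Finset.mem_univ, true_and]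
  have h1 : (Finset.univ.filter (fun σ => Qc n ((Ψ σ).2))).card
      = (n + 1) * ((pin n).filter (Qc n)).card :=
    calc (Finset.univ.filter (fun σ => Qc n ((Ψ σ).2))).card
      = ((Finset.univ.filter (fun σ => Qc n ((Ψ σ).2))).image Ψ).card :=
        (Finset.card_image_of_injective _ hinj).symm
    _ = ((Finset.univ.image Ψ).filter (fun p => Qc n p.2)).card := by
        rw [Finset.filter_image]
    _ = (((Finset.univ : Finset (Fin (n + 1))) ×ˢ pin n).filter (fun p => Qc n p.2)).card := by
        rw [himg]
    _ = ((Finset.univ : Finset (Fin (n + 1))) ×ˢ ((pin n).filter (Qc n))).card := by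
        rw [hsplit]
    _ = (n + 1) * ((pin n).filter (Qc n)).card := by
        rw [Finset.card_product, Finset.card_univ, Fintype.card_fin]
  rw [← h1]
  congr 1
  ext σ
  simp only [Finset.mem_filter, Finset.mem_univ, true_and]
  exact hPQ σ

end Stmt4Aux

theorem stmt4 (n : ℕ) :
    ((Finset.univ : Finset (Equiv.Perm (Fin (n + 1)))).filter
      (fun σ => D3 σ = (∅ : Finset ℕ))).card = (n + 1) * EulerNum n := by
  rw [Stmt4Aux.euler_eq]
  exact Stmt4Aux.lhs_eq n
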